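/- If the skew energy of an oriented graph is a rational number, then it is an even positive integer. -/

import Mathlib

open Matrix Polynomial

/-- The skew energy: the sum of the norms of the eigenvalues (with multiplicity). -/
noncomputable def skewEnergy {V : Type*} [Fintype V] [DecidableEq V]
    (S : Matrix V V ℝ) : ℝ :=
  (((S.map Complex.ofReal).charpoly.roots).map (fun z => ‖z‖)).sum

lemma eval_charpoly_mat {n : ℕ} (M : Matrix (Fin n) (Fin n) ℂ) (z : ℂ) :
    M.charpoly.eval z = (Matrix.scalar (Fin n) z - M).det := by
  rw [Matrix.charpoly, eval_det, Matrix.matPolyEquiv_charmatrix]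
  simp

lemma re_eq_zero_of_root {n : ℕ} {M : Matrix (Fin n) (Fin n) ℂ} (hM : Mᴴ = -M)
    {z : ℂ} (hz : M.charpoly.IsRoot z) : z.re = 0 := by
  have hdet : (Matrix.scalar (Fin n) z - M).det = 0 := by
    rw [← eval_charpoly_mat]; exact hz
  obtain ⟨v, hv0, hv⟩ := Matrix.exists_mulVec_eq_zero_iff.2 hdet
  have hMv : M *ᵥ v = z • v := by
    rw [Matrix.sub_mulVec] at hv
    have h1 : (Matrix.scalar (Fin n) z) *ᵥ v = z • v := by
      funext i
      simp [Matrix.scalar, Matrix.mulVec_diagonal]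
    rw [h1] at hv
    have := sub_eq_zero.mp hv
    exact this.symm
  set d : ℂ := star v ⬝ᵥ v with hd
  have hdnn : d = ((∑ i, Complex.normSq (v i) : ℝ) : ℂ) := by
    simp [hd, dotProduct, Complex.normSq_eq_conj_mul_self]
  have hdne : d ≠ 0 := by
    rw [hdnn]
    intro h
    apply hv0
    funext i
    have h' : (∑ i, Complex.normSq (v i)) = 0 := by exact_mod_cast h
    have := (Finset.sum_eq_zero_iff_of_nonneg
      (fun j _ => Complex.normSq_nonneg (v j))).mp h' i (Finset.mem_univ i)
    simpa [Complex.normSq_eq_zero] using this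
  set c : ℂ := star v ⬝ᵥ (M *ᵥ v) with hc
  have h2 : c = z * d := by rw [hc, hMv, dotProduct_smul, hd, smul_eq_mul]
  have h3 : star c = -c := by
    have h3' : star c = star (M *ᵥ v) ⬝ᵥ v := by
      rw [hc, Matrix.star_dotProduct, star_star]
    rw [h3', Matrix.star_mulVec, hM, ← Matrix.dotProduct_mulVec,
      Matrix.neg_mulVec, dotProduct_neg, hc]
  have hdstar : star d = d := by
    simp [hd, dotProduct, mul_comm]
  have h4 : star z * d = -(z * d) := by
    rw [h2, star_mul', hdstar] at h3
    exact h3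
  have h5 : (star z + z) * d = 0 := by ring_nf; linear_combination h4
  have h6 : star z + z = 0 := by
    rcases mul_eq_zero.mp h5 with h | h
    · exact h
    · exact absurd h hdne
  have : ((2 * z.re : ℝ) : ℂ) = 0 := by
    rw [← Complex.add_conj]
    rw [add_comm] at h6
    exact h6
  have : (2 : ℝ) * z.re = 0 := by exact_mod_cast this
  linarith

theorem skewEnergy_rational_even {n : ℕ}
    (S : Matrix (Fin n) (Fin n) ℤ) (hskew : Sᵀ = -S)
    (hentries : ∀ i j, S i j = 0 ∨ S i j = 1 ∨ S i j = -1) (hne : S ≠ 0)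
    (q : ℚ) (hq : skewEnergy (S.map (Int.cast : ℤ → ℝ)) = (q : ℝ)) :
    ∃ p : ℕ, 0 < p ∧ skewEnergy (S.map (Int.cast : ℤ → ℝ)) = 2 * (p : ℝ) := by
  classical
  rcases Nat.eq_zero_or_pos n with hn | hn
  · subst hn
    exact absurd (Subsingleton.elim S 0) hne
  set M : Matrix (Fin n) (Fin n) ℂ := S.map (Int.cast : ℤ → ℂ) with hMdef
  have hmap : (S.map (Int.cast : ℤ → ℝ)).map Complex.ofReal = M := by
    rw [Matrix.map_map]
    ext i j
    simp [hMdef]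
  have hdiag : ∀ i, S i i = 0 := by
    intro i
    have := congrFun (congrFun hskew i) i
    simp [Matrix.transpose_apply] at this
    omega
  have hMH : Mᴴ = -M := by
    ext i j
    have := congrFun (congrFun hskew j) i
    simp [hMdef, Matrix.conjTranspose_apply, Matrix.transpose_apply] at this ⊢
    rw [this]
    push_cast
    ring
  set R : Multiset ℂ := M.charpoly.roots with hR
  have hre : ∀ z ∈ R, z.re = 0 := fun z hz =>
    re_eq_zero_of_root hMH (isRoot_of_mem_roots hz)
  -- roots are algebraic integers
  have hint : ∀ z ∈ R, IsIntegral ℤ z := by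
    intro z hz
    refine ⟨S.charpoly, S.charpoly_monic, ?_⟩
    have h1 : M.charpoly = S.charpoly.map (Int.castRingHom ℂ) := by
      rw [hMdef]
      exact Matrix.charpoly_map S (Int.castRingHom ℂ)
    have h2 : M.charpoly.eval z = 0 := (isRoot_of_mem_roots hz)
    rw [Polynomial.eval₂_eq_eval_map]
    rw [h1] at h2
    rw [algebraMap_int_eq]; exact h2
  -- sum of roots is zero
  have hsum : R.sum = 0 := by
    rw [hR, ← Matrix.trace_eq_sum_roots_charpoly]
    rw [hMdef, Matrix.trace]
    simp [Matrix.diag, hdiag]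
  -- the two halves
  set P : ℂ → Prop := fun z => 0 ≤ z.im with hP
  set A : ℂ := (R.filter P).sum with hA
  set B : ℂ := (R.filter (fun z => ¬ P z)).sum with hB
  have hAB : A + B = 0 := by
    have h := congrArg Multiset.sum (Multiset.filter_add_not P R)
    rw [Multiset.sum_add] at h
    rw [hA, hB, h, hsum]
  -- energy
  set E : ℝ := skewEnergy (S.map (Int.cast : ℤ → ℝ)) with hE
  have hEdef : E = (R.map (fun z => ‖z‖)).sum := by
    rw [hE, skewEnergy, hmap, hR]
  have hcast : (E : ℂ) = (R.map (fun z => ((‖z‖ : ℝ) : ℂ))).sum := by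
    have h := map_multiset_sum Complex.ofRealHom (R.map (fun z => ‖z‖))
    rw [Multiset.map_map] at h
    rw [hEdef]
    simpa using h
  have habs_pos : ∀ z ∈ R.filter P, ((‖z‖ : ℝ) : ℂ) = -(Complex.I * z) := by
    intro z hz
    have h1 : z.re = 0 := hre z (Multiset.mem_of_mem_filter hz)
    have h2 : 0 ≤ z.im := (Multiset.mem_filter.mp hz).2
    have hz' : z = (z.im : ℂ) * Complex.I := by
      apply Complex.ext <;> simp [h1]
    rw [hz']
    rw [norm_mul, Complex.norm_I, mul_one, Complex.norm_real, Real.norm_eq_abs, abs_of_nonneg h2]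
    apply Complex.ext <;> simp
  have habs_neg : ∀ z ∈ R.filter (fun z => ¬ P z),
      ((‖z‖ : ℝ) : ℂ) = Complex.I * z := by
    intro z hz
    have h1 : z.re = 0 := hre z (Multiset.mem_of_mem_filter hz)
    have h2 : z.im ≤ 0 := by
      have := (Multiset.mem_filter.mp hz).2
      simp [hP] at this
      linarith
    have hz' : z = (z.im : ℂ) * Complex.I := by
      apply Complex.ext <;> simp [h1]
    rw [hz']
    rw [norm_mul, Complex.norm_I, mul_one, Complex.norm_real, Real.norm_eq_abs, abs_of_nonpos h2]
    apply Complex.ext <;> simp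
  have hEc : (E : ℂ) = -(2 * Complex.I * A) := by
    rw [hcast]
    rw [← Multiset.filter_add_not P R, Multiset.map_add, Multiset.sum_add]
    rw [Multiset.map_congr rfl habs_pos, Multiset.map_congr rfl habs_neg]
    have e1 : ((R.filter P).map (fun z => -(Complex.I * z))).sum = -(Complex.I * A) := by
      rw [hA]
      rw [show (fun z : ℂ => -(Complex.I * z)) = fun z => (-Complex.I) * z by funext z; ring]
      rw [Multiset.sum_map_mul_left]
      simp [Multiset.map_id']
    have e2 : ((R.filter (fun z => ¬ P z)).map (fun z => Complex.I * z)).sum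
        = Complex.I * B := by
      rw [hB, Multiset.sum_map_mul_left]
      simp [Multiset.map_id']
    rw [e1, e2]
    have hBA : B = -A := by linear_combination hAB
    rw [hBA]
    ring
  -- algebraic integrality of t = -(I * A)
  have hIint : IsIntegral ℤ Complex.I :=
    ⟨X ^ 2 + C 1, Polynomial.monic_X_pow_add_C 1 (by norm_num), by simp⟩
  have hAint : IsIntegral ℤ A := by
    have h : A ∈ integralClosure ℤ ℂ := by
      rw [hA]
      exact Subalgebra.multiset_sum_mem _ fun x hx =>
        hint x (Multiset.mem_of_mem_filter hx)
    exact h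
  set t : ℂ := -(Complex.I * A) with ht
  have htint : IsIntegral ℤ t := (hIint.mul hAint).neg
  have htq : t = algebraMap ℚ ℂ (q / 2) := by
    have h1 : ((q : ℝ) : ℂ) = 2 * t := by
      rw [← hq, hEc, ht]; ring
    have h2 : ((q : ℚ) : ℂ) = 2 * t := by exact_mod_cast h1
    have h3 : algebraMap ℚ ℂ (q / 2) = (q : ℂ) / 2 := by
      rw [show (algebraMap ℚ ℂ) (q / 2) = ((q / 2 : ℚ) : ℂ) from rfl]
      push_cast
      ring
    rw [h3]
    rw [h2]
    ring
  have hq2int : IsIntegral ℤ (q / 2 : ℚ) := by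
    rw [htq] at htint
    exact (isIntegral_algebraMap_iff (algebraMap ℚ ℂ).injective).mp htint
  obtain ⟨m, hm⟩ := IsIntegrallyClosed.isIntegral_iff.mp hq2int
  have hmq : (m : ℚ) = q / 2 := hm
  have hEm : E = 2 * (m : ℝ) := by
    rw [hq]
    have : q = 2 * (m : ℚ) := by rw [hmq]; ring
    rw [this]
    push_cast
    ring
  -- positivity: there is a nonzero root
  have hxz : ∃ z ∈ R, z ≠ 0 := by
    by_contra hall
    push_neg at hall
    have hsplit : M.charpoly.Splits := IsAlgClosed.splits _
    have hcard : Multiset.card R = n := by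
      rw [hR, (Polynomial.splits_iff_card_roots).mp hsplit,
        Matrix.charpoly_natDegree_eq_dim]
      simp
    have hXn : M.charpoly = X ^ n := by
      have h1 := hsplit.eq_prod_roots_of_monic M.charpoly_monic
      have h2 : R.map (fun a => X - C a) = R.map (fun _ => (X : ℂ[X])) :=
        Multiset.map_congr rfl fun z hz => by rw [hall z hz, map_zero, sub_zero]
      rw [← hR, h2, Multiset.map_const', Multiset.prod_replicate, hcard] at h1
      exact h1
    have hMn : M ^ n = 0 := by
      have h := Matrix.aeval_self_charpoly M
      rw [hXn] at h
      simpa using h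
    have hSn : S ^ n = 0 := by
      have h : (Int.castRingHom ℂ).mapMatrix (S ^ n) = 0 := by
        rw [map_pow]
        rw [RingHom.mapMatrix_apply]
        exact hMn
      rw [RingHom.mapMatrix_apply] at h
      ext i j
      have h3 := congrFun (congrFun h i) j
      simp only [Matrix.map_apply, Matrix.zero_apply, Int.coe_castRingHom] at h3
      simp only [Matrix.zero_apply]
      exact_mod_cast h3
    have hnil : IsNilpotent (S * S) := by
      refine ⟨n, ?_⟩
      rw [(Commute.refl S).mul_pow, hSn, zero_mul]
    have htr : Matrix.trace (S * S) = 0 :=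
      (Matrix.isNilpotent_trace_of_isNilpotent hnil).eq_zero
    have htr2 : Matrix.trace (S * S) = -∑ i, ∑ j, (S i j) ^ 2 := by
      have hji : ∀ i j : Fin n, S j i = -S i j := fun i j => by
        have := congrFun (congrFun hskew j) i
        simp [Matrix.transpose_apply] at this
        omega
      rw [Matrix.trace]
      simp only [Matrix.diag_apply, Matrix.mul_apply]
      rw [← Finset.sum_neg_distrib]
      refine Finset.sum_congr rfl fun i _ => ?_
      rw [← Finset.sum_neg_distrib]
      refine Finset.sum_congr rfl fun j _ => ?_
      rw [hji i j]
      ring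
    have hsq : ∑ i, ∑ j, (S i j) ^ 2 = 0 := by
      rw [htr2] at htr
      omega
    apply hne
    ext i j
    have h1 := (Finset.sum_eq_zero_iff_of_nonneg fun i _ =>
      Finset.sum_nonneg fun j _ => sq_nonneg (S i j)).mp hsq i (Finset.mem_univ i)
    have h2 := (Finset.sum_eq_zero_iff_of_nonneg fun j _ =>
      sq_nonneg (S i j)).mp h1 j (Finset.mem_univ j)
    have := sq_eq_zero_iff.mp h2
    simpa using this
  obtain ⟨z₀, hz₀R, hz₀⟩ := hxz
  have hEpos : 0 < E := by
    have hsplitE : E = ‖z₀‖ + ((R.erase z₀).map (fun z => ‖z‖)).sum := by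
      rw [hEdef]
      conv_lhs => rw [← Multiset.cons_erase hz₀R]
      rw [Multiset.map_cons, Multiset.sum_cons]
    have hrest : 0 ≤ ((R.erase z₀).map (fun z => ‖z‖)).sum := by
      apply Multiset.sum_nonneg
      intro x hx
      obtain ⟨z, _, rfl⟩ := Multiset.mem_map.mp hx
      exact norm_nonneg _
    have habs : 0 < ‖z₀‖ := norm_pos_iff.mpr hz₀
    rw [hsplitE]
    linarith
  have hmpos : 0 < m := by
    by_contra h
    push_neg at h
    have : (m : ℝ) ≤ 0 := by exact_mod_cast h
    rw [hEm] at hEpos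
    linarith
  refine ⟨m.toNat, by omega, ?_⟩
  rw [hEm]
  congr 1
  exact_mod_cast (Int.toNat_of_nonneg hmpos.le).symm
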